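/- Let M ∈ ℝ^{n×n}, let S ∈ ℝ^{n×n} have nonnegative entries, and let Z = Z(c; g^(1),…,g^(p)) be a zonotope in ℝ^n. For each i = 1,…,n let h^(i) ∈ ℝ^n be the vector whose i-th entry equals (S (|c| + Σ_{k=1}^p |g^(k)|))_i and whose other entries are zero, where |v| denotes the entrywise absolute value of a vector v. Then for every matrix G ∈ ℝ^{n×n} with |G_{ij}| ≤ S_{ij} for all i, j and every x ∈ Z, the vector (M + G) x belongs to the zonotope Z(M c; M g^(1),…,M g^(p), h^(1),…,h^(n)). -/

import Mathlib

open Matrix Set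

/-- The zonotope with center `c` and generators `g i`. -/
def zonotope {n : ℕ} {ι : Type*} [Fintype ι] (c : Fin n → ℝ) (g : ι → Fin n → ℝ) :
    Set (Fin n → ℝ) :=
  {x | ∃ β : ι → ℝ, (∀ i, β i ∈ Set.Icc (-1 : ℝ) 1) ∧ x = c + ∑ i, β i • g i}

/-- Interval matrix times a zonotope: for every matrix `G` with
`|G_{ij}| ≤ S_{ij}` and every `x` in the zonotope `Z(c; g)`, the vector `(M + G) x`
belongs to the zonotope `Z(M c; M g⁽¹⁾,…,M g⁽ᵖ⁾, h⁽¹⁾,…,h⁽ⁿ⁾)`, where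
`h⁽ⁱ⁾` is supported on coordinate `i` with value `(S (|c| + Σₖ |g⁽ᵏ⁾|))ᵢ`. -/
theorem stmt18 {n p : ℕ} (M S : Matrix (Fin n) (Fin n) ℝ) (hS : ∀ i j, 0 ≤ S i j)
    (c : Fin n → ℝ) (g : Fin p → Fin n → ℝ)
    (h : Fin n → Fin n → ℝ)
    (hh : ∀ i : Fin n, h i = Pi.single i
      ((S *ᵥ (fun j => |c j| + ∑ k, |g k j|)) i))
    (G : Matrix (Fin n) (Fin n) ℝ) (hG : ∀ i j, |G i j| ≤ S i j)
    (x : Fin n → ℝ) (hx : x ∈ zonotope c g) :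
    (M + G) *ᵥ x ∈
      zonotope (M *ᵥ c) (Sum.elim (fun i : Fin p => M *ᵥ g i) (fun i : Fin n => h i)) := by
  obtain ⟨β, hβ, hxeq⟩ := hx
  -- the vector d
  set d : Fin n → ℝ := S *ᵥ (fun j => |c j| + ∑ k, |g k j|) with hd
  -- bound |x j| ≤ |c j| + ∑ k, |g k j|
  have hxb : ∀ j, |x j| ≤ |c j| + ∑ k, |g k j| := by
    intro j
    rw [hxeq]
    simp only [Pi.add_apply, Finset.sum_apply, Pi.smul_apply, smul_eq_mul]
    calc |c j + ∑ k, β k * g k j| ≤ |c j| + |∑ k, β k * g k j| := abs_add_le _ _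
      _ ≤ |c j| + ∑ k, |β k * g k j| := by
          gcongr; exact Finset.abs_sum_le_sum_abs _ _
      _ ≤ |c j| + ∑ k, |g k j| := by
          refine add_le_add (le_refl _) (Finset.sum_le_sum fun k _ => ?_)
          rw [abs_mul]
          have := hβ k
          have h1 : |β k| ≤ 1 := abs_le.mpr ⟨this.1, this.2⟩
          calc |β k| * |g k j| ≤ 1 * |g k j| :=
              mul_le_mul_of_nonneg_right h1 (abs_nonneg _)
            _ = |g k j| := one_mul _
  have hGb : ∀ i, |(G *ᵥ x) i| ≤ d i := by
    intro i
    rw [hd]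
    simp only [mulVec, dotProduct]
    calc |∑ j, G i j * x j| ≤ ∑ j, |G i j * x j| := Finset.abs_sum_le_sum_abs _ _
      _ ≤ ∑ j, S i j * (|c j| + ∑ k, |g k j|) := by
          refine Finset.sum_le_sum fun j _ => ?_
          rw [abs_mul]
          exact mul_le_mul (hG i j) (hxb j) (abs_nonneg _)
            (le_trans (abs_nonneg _) (hG i j))
  have hdnn : ∀ i, 0 ≤ d i := fun i => le_trans (abs_nonneg _) (hGb i)
  -- coefficients
  set γ : Fin n → ℝ := fun i => if d i = 0 then 0 else (G *ᵥ x) i / d i with hγ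
  have hγb : ∀ i, γ i ∈ Set.Icc (-1 : ℝ) 1 := by
    intro i
    rw [hγ]
    by_cases hdi : d i = 0
    · simp [hdi]
    · have hdpos : 0 < d i := lt_of_le_of_ne (hdnn i) (Ne.symm hdi)
      simp only [hdi, if_false]
      rw [Set.mem_Icc, ← abs_le, abs_div, abs_of_pos hdpos,
        div_le_one hdpos]
      exact hGb i
  have hγd : ∀ i, γ i * d i = (G *ᵥ x) i := by
    intro i
    rw [hγ]
    by_cases hdi : d i = 0
    · simp only [hdi, if_true, zero_mul]
      have := hGb i
      rw [hdi] at this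
      have := abs_nonpos_iff.mp this
      linarith [abs_nonneg ((G *ᵥ x) i), this]
    · simp only [hdi, if_false]
      field_simp
  refine ⟨Sum.elim β γ, ?_, ?_⟩
  · rintro (k | i)
    · exact hβ k
    · exact hγb i
  · rw [Fintype.sum_sum_type]
    simp only [Sum.elim_inl, Sum.elim_inr]
    have hsum2 : ∑ i : Fin n, γ i • h i = G *ᵥ x := by
      have : ∀ i, γ i • h i = Pi.single i ((G *ᵥ x) i) := by
        intro i
        rw [hh i, ← Pi.single_smul, smul_eq_mul, hγd i]
      simp_rw [this]
      exact Finset.univ_sum_single _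
    rw [hsum2, add_mulVec, hxeq, mulVec_add]
    have : M *ᵥ (∑ k, β k • g k) = ∑ k, β k • (M *ᵥ g k) := by
      ext i
      simp only [mulVec, dotProduct, Finset.sum_apply, Pi.smul_apply, smul_eq_mul,
        Finset.mul_sum]
      rw [Finset.sum_comm]
      exact Finset.sum_congr rfl fun k _ =>
        Finset.sum_congr rfl fun j _ => by ring
    rw [this]
    abel
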